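/- Let X, Y, Z be metric spaces, F : X ⇒ Y and G : Y ⇒ Z set-valued maps, and x̄, ȳ, z̄ with ȳ ∈ F(x̄), z̄ ∈ G(ȳ). Suppose F has the Aubin property around (x̄, ȳ) with constant l_F, G has the Aubin property around (ȳ, z̄) with constant l_G, and the pair (F, G) is locally composition-stable around (x̄, ȳ, z̄): for every ε > 0 there is δ > 0 such that for every x ∈ B(x̄, δ) and z ∈ (G∘F)(x) ∩ B(z̄, δ), there exists y ∈ F(x) ∩ B(ȳ, ε) with z ∈ G(y). Then G∘F has the Aubin property around (x̄, z̄), with lip(G∘F)(x̄, z̄) ≤ l_F · l_G (in particular, there exists δ > 0 such that for all x, u ∈ B(x̄, δ), e((G∘F)(x) ∩ B(z̄, δ), (G∘F)(u)) ≤ l_G l_F d(x, u)). -/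

import Mathlib

open Metric Set Filter Topology ENNReal

noncomputable def exc {α : Type*} [PseudoEMetricSpace α] (A B : Set α) : ℝ≥0∞ :=
  ⨆ a ∈ A, EMetric.infEdist a B

theorem stmt10 {X Y Z : Type*} [MetricSpace X] [MetricSpace Y] [MetricSpace Z]
    (F : X → Set Y) (G : Y → Set Z) (x₀ : X) (y₀ : Y) (z₀ : Z)
    (h1 : y₀ ∈ F x₀) (h2 : z₀ ∈ G y₀)
    (lF lG : ℝ) (hlF : 0 < lF) (hlG : 0 < lG)
    (hAubF : ∃ U ∈ 𝓝 x₀, ∃ V ∈ 𝓝 y₀, ∀ x ∈ U, ∀ u ∈ U,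
      exc (F x ∩ V) (F u) ≤ ENNReal.ofReal (lF * dist x u))
    (hAubG : ∃ U ∈ 𝓝 y₀, ∃ V ∈ 𝓝 z₀, ∀ y ∈ U, ∀ v ∈ U,
      exc (G y ∩ V) (G v) ≤ ENNReal.ofReal (lG * dist y v))
    (hstab : ∀ ε > (0:ℝ), ∃ δ > (0:ℝ), ∀ x ∈ Metric.ball x₀ δ,
      ∀ z ∈ (⋃ y ∈ F x, G y) ∩ Metric.ball z₀ δ,
        ∃ y ∈ F x ∩ Metric.ball y₀ ε, z ∈ G y) :
    ∃ δ > (0:ℝ), ∀ x ∈ Metric.ball x₀ δ, ∀ u ∈ Metric.ball x₀ δ,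
      exc ((⋃ y ∈ F x, G y) ∩ Metric.ball z₀ δ) (⋃ y ∈ F u, G y) ≤
        ENNReal.ofReal (lG * lF * dist x u) := by
  obtain ⟨UF, hUF, VF, hVF, HF⟩ := hAubF
  obtain ⟨UG, hUG, VG, hVG, HG⟩ := hAubG
  obtain ⟨ρ1, hρ1, hρ1sub⟩ := Metric.mem_nhds_iff.1 hVF
  obtain ⟨ρ2, hρ2, hρ2sub⟩ := Metric.mem_nhds_iff.1 hUG
  set ρ := min ρ1 ρ2 with hρdef
  have hρ : 0 < ρ := lt_min hρ1 hρ2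
  obtain ⟨δ1, hδ1, hstab'⟩ := hstab (ρ/2) (by positivity)
  obtain ⟨r1, hr1, hr1sub⟩ := Metric.mem_nhds_iff.1 hUF
  obtain ⟨r2, hr2, hr2sub⟩ := Metric.mem_nhds_iff.1 hVG
  set δ := min (min δ1 r1) (min r2 (ρ/(2*(2*lF+1)))) with hδdef
  have hδpos : 0 < δ := lt_min (lt_min hδ1 hr1) (lt_min hr2 (by positivity))
  have hδle1 : δ ≤ δ1 := (min_le_left _ _).trans (min_le_left _ _)
  have hδr1 : δ ≤ r1 := (min_le_left _ _).trans (min_le_right _ _)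
  have hδr2 : δ ≤ r2 := (min_le_right _ _).trans (min_le_left _ _)
  have hδρ : δ ≤ ρ/(2*(2*lF+1)) := (min_le_right _ _).trans (min_le_right _ _)
  have hδρ' : (2*lF+1)*δ ≤ ρ/2 := by
    have h := mul_le_mul_of_nonneg_left hδρ (by positivity : (0:ℝ) ≤ 2*lF+1)
    have he : (2*lF+1) * (ρ/(2*(2*lF+1))) = ρ/2 := by field_simp
    rw [he] at h; exact h
  refine ⟨δ, hδpos, ?_⟩
  intro x hx u hu
  refine iSup₂_le fun z hz => ?_
  have hxu : dist x u < 2*δ := by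
    have h1 := dist_triangle x x₀ u
    rw [mem_ball] at hx hu
    rw [dist_comm u x₀] at hu
    linarith
  obtain ⟨y, ⟨hyF, hyb⟩, hzy⟩ := hstab' x (Metric.ball_subset_ball hδle1 hx)
    z ⟨hz.1, Metric.ball_subset_ball hδle1 hz.2⟩
  rw [mem_ball] at hyb
  have hxU : x ∈ UF := hr1sub (Metric.ball_subset_ball hδr1 hx)
  have huU : u ∈ UF := hr1sub (Metric.ball_subset_ball hδr1 hu)
  have hyV : y ∈ VF := hρ1sub (by
    rw [mem_ball]; have : ρ ≤ ρ1 := min_le_left _ _; linarith)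
  have hyUG : y ∈ UG := hρ2sub (by
    rw [mem_ball]; have : ρ ≤ ρ2 := min_le_right _ _; linarith)
  have hzVG : z ∈ VG := hr2sub (Metric.ball_subset_ball hδr2 hz.2)
  have hinf : EMetric.infEdist y (F u) ≤ ENNReal.ofReal (lF * dist x u) :=
    le_trans (le_iSup₂ (f := fun a (_ : a ∈ F x ∩ VF) => EMetric.infEdist a (F u))
      y ⟨hyF, hyV⟩) (HF x hxU u huU)
  apply ENNReal.le_of_forall_pos_le_add
  intro ε' hε' _
  set η := min δ ((ε':ℝ)/lG) with hηdef
  have hηpos : 0 < η := lt_min hδpos (by positivity)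
  have hηδ : η ≤ δ := min_le_left _ _
  have hηε : lG * η ≤ (ε':ℝ) := by
    have : η ≤ (ε':ℝ)/lG := min_le_right _ _
    rw [← le_div_iff₀' hlG]; exact this
  have hlt : EMetric.infEdist y (F u) < ENNReal.ofReal (lF * dist x u + η) :=
    hinf.trans_lt (by
      rw [ENNReal.ofReal_lt_ofReal_iff (by positivity)]
      linarith)
  rw [EMetric.infEdist, Metric.infEDist_lt_iff] at hlt
  obtain ⟨y', hy'F, hy'd⟩ := hlt
  rw [edist_dist, ENNReal.ofReal_lt_ofReal_iff_of_nonneg dist_nonneg] at hy'd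
  have hy'UG : y' ∈ UG := hρ2sub (by
    rw [mem_ball]
    have h3 := dist_triangle y' y y₀
    rw [dist_comm y' y] at h3
    have h4 : lF * dist x u ≤ lF * (2*δ) := by nlinarith
    have : ρ ≤ ρ2 := min_le_right _ _
    nlinarith)
  have hG : EMetric.infEdist z (G y') ≤ ENNReal.ofReal (lG * dist y y') :=
    le_trans (le_iSup₂ (f := fun a (_ : a ∈ G y ∩ VG) => EMetric.infEdist a (G y'))
      z ⟨hzy, hzVG⟩) (HG y hyUG y' hy'UG)
  have hsub : G y' ⊆ ⋃ yy ∈ F u, G yy := fun w hw => mem_biUnion hy'F hw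
  calc EMetric.infEdist z (⋃ yy ∈ F u, G yy) ≤ EMetric.infEdist z (G y') :=
        EMetric.infEdist_anti hsub
    _ ≤ ENNReal.ofReal (lG * dist y y') := hG
    _ ≤ ENNReal.ofReal (lG * lF * dist x u + lG * η) := by
        apply ENNReal.ofReal_le_ofReal; nlinarith
    _ = ENNReal.ofReal (lG * lF * dist x u) + ENNReal.ofReal (lG * η) := by
        rw [ENNReal.ofReal_add (by positivity) (by positivity)]
    _ ≤ ENNReal.ofReal (lG * lF * dist x u) + ε' := by
        gcongr
        rw [← ENNReal.ofReal_coe_nnreal]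
        exact ENNReal.ofReal_le_ofReal hηε
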